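/- The Rao bound for strength 2: every orthogonal array OA(r, N, d, 2) satisfies r ≥ 1 + N(d−1). -/

import Mathlib

open Finset

/-- Embedding of `Fin (d-1)` into the nonzero symbols of `Fin d`. -/
def raoEmb {d : ℕ} (s : Fin (d - 1)) : Fin d := ⟨s.1 + 1, by have := s.2; omega⟩

lemma raoEmb_inj {d : ℕ} : Function.Injective (raoEmb (d := d)) := by
  intro a b h
  have : a.1 + 1 = b.1 + 1 := congrArg Fin.val h
  exact Fin.ext (by omega)

/-- Rao bound for strength 2: every orthogonal array OA(r,N,d,2) with index `lam ≥ 1`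
satisfies `r ≥ 1 + N(d-1)`. -/
theorem rao_bound_strength_two {r N d lam : ℕ} (hd : 2 ≤ d) (hN : 2 ≤ N) (hlam : 1 ≤ lam)
    (A : Fin r → Fin N → Fin d)
    (hOA : ∀ c : Fin 2 → Fin N, Function.Injective c → ∀ t : Fin 2 → Fin d,
      (Finset.univ.filter fun i : Fin r => ∀ j, A i (c j) = t j).card = lam) :
    1 + N * (d - 1) ≤ r := by
  classical
  haveI : Nontrivial (Fin N) := Fin.nontrivial_iff_two_le.mpr hN
  have dR : (0:ℝ) < (d:ℝ) := by
    have : (0:ℕ) < d := by omega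
    exact_mod_cast this
  have lamR : (0:ℝ) < (lam:ℝ) := by exact_mod_cast hlam
  -- pair counts
  have pair : ∀ (j j' : Fin N), j ≠ j' → ∀ s s' : Fin d,
      (Finset.univ.filter fun i : Fin r => A i j = s ∧ A i j' = s').card = lam := by
    intro j j' hjj' s s'
    have hinj : Function.Injective ![j, j'] := by
      intro a b hab
      fin_cases a <;> fin_cases b <;> simp_all
    have h := hOA ![j, j'] hinj ![s, s']
    rw [← h]
    congr 1
    ext i
    simp [Fin.forall_fin_two]
  -- single-column counts
  have single : ∀ (j : Fin N) (s : Fin d),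
      (Finset.univ.filter fun i : Fin r => A i j = s).card = lam * d := by
    intro j s
    obtain ⟨j', hj'⟩ := exists_ne j
    have h1 : (Finset.univ.filter fun i : Fin r => A i j = s).card
        = ∑ s' : Fin d, ((Finset.univ.filter fun i : Fin r => A i j = s).filter
            fun i => A i j' = s').card :=
      Finset.card_eq_sum_card_fiberwise (fun i _ => Finset.mem_univ (A i j'))
    rw [h1]
    have h2 : ∀ s' : Fin d, ((Finset.univ.filter fun i : Fin r => A i j = s).filter
        fun i => A i j' = s').card = lam := by
      intro s'
      rw [Finset.filter_filter]
      exact pair j j' (fun h => hj' h.symm) s s'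
    simp [h2, mul_comm]
  -- total row count
  have hr : r = lam * d * d := by
    have h1 : (Finset.univ : Finset (Fin r)).card
        = ∑ s : Fin d, (Finset.univ.filter fun i : Fin r => A i ⟨0, by omega⟩ = s).card :=
      Finset.card_eq_sum_card_fiberwise (fun i _ => Finset.mem_univ _)
    simp only [Finset.card_univ, Fintype.card_fin, single, Finset.sum_const,
      smul_eq_mul] at h1
    rw [h1]; ring
  -- real-valued indicator sums
  have S1 : ∀ (j : Fin N) (s : Fin d),
      ∑ i : Fin r, (if A i j = s then (1:ℝ) else 0) = (lam : ℝ) * d := by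
    intro j s
    rw [Finset.sum_boole, single]
    push_cast; ring
  have S2 : ∀ (j j' : Fin N), j ≠ j' → ∀ s s' : Fin d,
      ∑ i : Fin r, (if A i j = s then (1:ℝ) else 0) * (if A i j' = s' then 1 else 0)
        = (lam : ℝ) := by
    intro j j' hjj' s s'
    have he : ∀ i : Fin r, (if A i j = s then (1:ℝ) else 0) * (if A i j' = s' then 1 else 0)
        = if A i j = s ∧ A i j' = s' then 1 else 0 := by
      intro i; by_cases h1 : A i j = s <;> by_cases h2 : A i j' = s' <;> simp [h1, h2]
    simp only [he]
    rw [Finset.sum_boole, pair j j' hjj' s s']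
  have S2s : ∀ (j : Fin N) (s s' : Fin d),
      ∑ i : Fin r, (if A i j = s then (1:ℝ) else 0) * (if A i j = s' then 1 else 0)
        = if s = s' then (lam : ℝ) * d else 0 := by
    intro j s s'
    by_cases hss : s = s'
    · subst hss
      rw [if_pos rfl]
      have he : ∀ i : Fin r, (if A i j = s then (1:ℝ) else 0) * (if A i j = s then 1 else 0)
          = if A i j = s then 1 else 0 := by
        intro i; by_cases h1 : A i j = s <;> simp [h1]
      simp only [he]
      exact S1 j s
    · rw [if_neg hss]
      apply Finset.sum_eq_zero
      intro i _
      by_cases h1 : A i j = s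
      · have h2 : ¬ A i j = s' := by rw [h1]; exact hss
        simp [h1, h2, hss]
      · simp [h1]
  -- the linearly independent family
  set v : Option (Fin N × Fin (d - 1)) → (Fin r → ℝ) := fun k =>
    Option.elim k (fun _ => 1)
      (fun p i => (if A i p.1 = raoEmb p.2 then 1 else 0) - 1 / d) with hv
  have hLI : LinearIndependent ℝ v := by
    rw [Fintype.linearIndependent_iff]
    intro g hg
    have hpt : ∀ i : Fin r, (∑ k, g k * v k i) = 0 := by
      intro i
      have h := congrFun hg i
      simpa [Finset.sum_apply] using h
    -- pairing with a weight function w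
    have pairw : ∀ w : Fin r → ℝ, ∑ k, g k * (∑ i : Fin r, w i * v k i) = 0 := by
      intro w
      calc ∑ k, g k * (∑ i : Fin r, w i * v k i)
          = ∑ k, ∑ i : Fin r, w i * (g k * v k i) := by
            apply Finset.sum_congr rfl
            intro k _
            rw [Finset.mul_sum]
            apply Finset.sum_congr rfl
            intro i _
            ring
        _ = ∑ i : Fin r, ∑ k, w i * (g k * v k i) := Finset.sum_comm
        _ = ∑ i : Fin r, w i * ∑ k, g k * v k i := by
            apply Finset.sum_congr rfl
            intro i _
            rw [Finset.mul_sum]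
        _ = 0 := by simp [hpt]
    -- pairing with all-ones gives g none = 0
    have hnone : g none = 0 := by
      have h := pairw (fun _ => 1)
      rw [Fintype.sum_option] at h
      have e1 : ∑ i : Fin r, (1:ℝ) * v none i = (lam : ℝ) * d * d := by
        simp only [hv, Option.elim, one_mul]
        rw [Finset.sum_const, Finset.card_univ, Fintype.card_fin, hr]
        push_cast; ring
      have e2 : ∀ p : Fin N × Fin (d-1),
          ∑ i : Fin r, (1:ℝ) * v (some p) i = 0 := by
        rintro ⟨j, s⟩
        simp only [hv, Option.elim, one_mul]
        rw [Finset.sum_sub_distrib, S1 j (raoEmb s)]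
        rw [Finset.sum_const, Finset.card_univ, Fintype.card_fin, hr, nsmul_eq_mul]
        push_cast
        field_simp
        ring
      rw [e1] at h
      simp only [e2, mul_zero, Finset.sum_const_zero, add_zero] at h
      have hne : ((lam : ℝ) * d * d) ≠ 0 := by positivity
      exact (mul_eq_zero.mp h).resolve_right hne
    -- pairing with column indicators
    have key : ∀ (j₀ : Fin N) (s₀ : Fin (d-1)),
        (d : ℝ) * g (some (j₀, s₀)) = ∑ s : Fin (d-1), g (some (j₀, s)) := by
      intro j₀ s₀
      have h := pairw (fun i => if A i j₀ = raoEmb s₀ then 1 else 0)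
      rw [Fintype.sum_option, hnone, zero_mul, zero_add, Fintype.sum_prod_type] at h
      -- inner products with the non-constant vectors
      have einner : ∀ (j : Fin N) (s : Fin (d-1)),
          ∑ i : Fin r, (if A i j₀ = raoEmb s₀ then (1:ℝ) else 0) * v (some (j, s)) i
            = (if j = j₀ then (if s = s₀ then (lam:ℝ) * d else 0) else (lam:ℝ)) - lam := by
        intro j s
        simp only [hv, Option.elim]
        have hstep : ∑ i : Fin r, (if A i j₀ = raoEmb s₀ then (1:ℝ) else 0) *
              ((if A i j = raoEmb s then 1 else 0) - 1 / d)
            = (∑ i : Fin r, (if A i j₀ = raoEmb s₀ then (1:ℝ) else 0) *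
                (if A i j = raoEmb s then 1 else 0))
              - (1/(d:ℝ)) * ∑ i : Fin r, (if A i j₀ = raoEmb s₀ then (1:ℝ) else 0) := by
          rw [Finset.mul_sum, ← Finset.sum_sub_distrib]
          apply Finset.sum_congr rfl
          intro i _
          ring
        rw [hstep, S1 j₀ (raoEmb s₀)]
        have hlast : (1/(d:ℝ)) * ((lam:ℝ) * d) = (lam:ℝ) := by field_simp
        rw [hlast]
        congr 1
        by_cases hj : j = j₀
        · subst hj
          rw [if_pos rfl, S2s j (raoEmb s₀) (raoEmb s)]
          by_cases hs : s = s₀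
          · subst hs; simp
          · rw [if_neg hs, if_neg (fun hh : raoEmb s₀ = raoEmb s => hs (raoEmb_inj hh).symm)]
        · rw [if_neg hj, S2 j₀ j (fun h => hj h.symm)]
      simp only [einner] at h
      rw [Fintype.sum_eq_single j₀ (fun j hj => by
        apply Finset.sum_eq_zero
        intro s _
        rw [if_neg hj, sub_self, mul_zero])] at h
      simp only [if_pos rfl, if_true] at h
      have hterm : ∀ s : Fin (d-1), g (some (j₀, s)) * ((if s = s₀ then (lam:ℝ) * d else 0) - lam)
          = (if s = s₀ then g (some (j₀, s)) * ((lam:ℝ) * d) else 0)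
            - (lam:ℝ) * g (some (j₀, s)) := by
        intro s
        by_cases hs : s = s₀ <;> simp [hs] <;> ring
      rw [Finset.sum_congr rfl (fun s _ => hterm s), Finset.sum_sub_distrib,
        Finset.sum_ite_eq' Finset.univ s₀, if_pos (Finset.mem_univ s₀),
        ← Finset.mul_sum, sub_eq_zero] at h
      have h3 : (lam:ℝ) * ((d:ℝ) * g (some (j₀, s₀))) = (lam:ℝ) * ∑ s, g (some (j₀, s)) := by
        ring_nf
        ring_nf at h
        linarith
      exact mul_left_cancel₀ (ne_of_gt lamR) h3
    -- conclude g vanishes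
    have keyT : ∀ j₀ : Fin N, ∑ s : Fin (d-1), g (some (j₀, s)) = 0 := by
      intro j₀
      have hsum := Finset.sum_congr rfl (fun s₀ (_ : s₀ ∈ Finset.univ) => key j₀ s₀)
      rw [← Finset.mul_sum] at hsum
      have hcard : ∑ _s : Fin (d-1), (∑ s : Fin (d-1), g (some (j₀, s)))
          = ((d:ℝ) - 1) * ∑ s : Fin (d-1), g (some (j₀, s)) := by
        rw [Finset.sum_const, Finset.card_univ, Fintype.card_fin, nsmul_eq_mul]
        have hc : ((d - 1 : ℕ) : ℝ) = (d : ℝ) - 1 := by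
          have h1d : (1:ℕ) ≤ d := by omega
          rw [Nat.cast_sub h1d]
          simp
        rw [hc]
      rw [hcard] at hsum
      ring_nf at hsum
      linarith
    intro k
    match k with
    | none => exact hnone
    | some (j₀, s₀) =>
      have h := key j₀ s₀
      rw [keyT j₀] at h
      have := mul_eq_zero.mp h
      rcases this with h' | h'
      · exact absurd h' (ne_of_gt dR)
      · exact h'
  have hcard := hLI.fintype_card_le_finrank
  rw [Module.finrank_fin_fun] at hcard
  have hcι : Fintype.card (Option (Fin N × Fin (d - 1))) = N * (d - 1) + 1 := by
    simp
  omega
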